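/- Let E be a Banach space, J ⊆ ℝ a nondegenerate interval, Z a normed space, and U ⊆ E, P ⊆ Z open sets. Let f : J × U × P → E be continuous and locally Lipschitz in the U-variable, uniformly in the other variables near every point. Then for all t₀ ∈ J, z₀ ∈ U, q₀ ∈ P, there exist a convex relative neighbourhood J₀ ⊆ J of t₀ and open neighbourhoods U₀ ⊆ U of z₀ and P₀ ⊆ P of q₀ such that for all (τ₀, x₀, p₀) ∈ J₀ × U₀ × P₀, the initial value problem x'(t) = f(t, x(t), p₀), x(τ₀) = x₀ has a unique solution φ_{τ₀,x₀,p₀} : J₀ → U, and for fixed τ₀ the map (t, x₀, p₀) ↦ φ_{τ₀,x₀,p₀}(t) is continuous on J₀ × U₀ × P₀. -/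

import Mathlib

open Set Metric Real Filter

section PDPLhelpers

variable {E : Type*} [NormedAddCommGroup E] [NormedSpace ℝ E]




/-- Forward-in-time uniqueness for an ODE with a locally (in time and space)
Lipschitz right-hand side, for solutions taking values in an open set `s`. -/
lemma myUniqRight {v : ℝ → E → E} {s : Set E} {a b : ℝ}
    (hloc : ∀ T ∈ Icc a b, ∀ x ∈ s, ∃ ε > (0:ℝ), ∃ K : NNReal,
      ∀ t ∈ Icc a b, |t - T| < ε → LipschitzOnWith K (v t) (s ∩ ball x ε))
    {ψ α : ℝ → E}
    (hψ : ∀ t ∈ Icc a b, ψ t ∈ s ∧ HasDerivWithinAt ψ (v t (ψ t)) (Icc a b) t)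
    (hα : ∀ t ∈ Icc a b, α t ∈ s ∧ HasDerivWithinAt α (v t (α t)) (Icc a b) t)
    (hab : a ≤ b) (heq : ψ a = α a) : EqOn ψ α (Icc a b) := by
  have hψc : ContinuousOn ψ (Icc a b) := fun t ht => ((hψ t ht).2).continuousWithinAt
  have hαc : ContinuousOn α (Icc a b) := fun t ht => ((hα t ht).2).continuousWithinAt
  set A : Set ℝ := {T | T ∈ Icc a b ∧ EqOn ψ α (Icc a T)} with hA
  have haA : a ∈ A := ⟨⟨le_rfl, hab⟩, by
    intro u hu
    have : u = a := le_antisymm hu.2 hu.1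
    simpa [this] using heq⟩
  have hAne : A.Nonempty := ⟨a, haA⟩
  have hAbdd : BddAbove A := ⟨b, fun T hT => hT.1.2⟩
  set T' := sSup A with hT'
  have haT' : a ≤ T' := le_csSup hAbdd haA
  have hT'b : T' ≤ b := csSup_le hAne fun T hT => hT.1.2
  have hT'mem : T' ∈ Icc a b := ⟨haT', hT'b⟩
  have hlt : ∀ u ∈ Icc a b, u < T' → ψ u = α u := by
    intro u hu hult
    obtain ⟨T, hTA, h⟩ := exists_lt_of_lt_csSup hAne hult
    exact hTA.2 ⟨hu.1, h.le⟩
  have hT'eq : ψ T' = α T' := by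
    rcases eq_or_lt_of_le haT' with h | h
    · rw [← h]; exact heq
    · have hsub : Ico a T' ⊆ Icc a b := fun z hz => ⟨hz.1, hz.2.le.trans hT'b⟩
      have hucl : T' ∈ closure (Ico a T') := by
        rw [closure_Ico h.ne]
        exact ⟨le_of_lt h, le_rfl⟩
      have hne : (nhdsWithin T' (Ico a T')).NeBot := mem_closure_iff_nhdsWithin_neBot.1 hucl
      have t1 : Tendsto ψ (nhdsWithin T' (Ico a T')) (nhds (ψ T')) :=
        ((hψc T' hT'mem).mono hsub).tendsto
      have t2 : Tendsto α (nhdsWithin T' (Ico a T')) (nhds (α T')) :=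
        ((hαc T' hT'mem).mono hsub).tendsto
      have t3 : Tendsto ψ (nhdsWithin T' (Ico a T')) (nhds (α T')) := by
        refine t2.congr' ?_
        filter_upwards [self_mem_nhdsWithin] with z hz
        exact (hlt z (hsub hz) hz.2).symm
      exact tendsto_nhds_unique t1 t3
  have hT'A : EqOn ψ α (Icc a T') := by
    intro u hu
    rcases eq_or_lt_of_le hu.2 with h | h
    · rw [h]; exact hT'eq
    · exact hlt u ⟨hu.1, hu.2.trans hT'b⟩ h
  rcases eq_or_lt_of_le hT'b with h | h
  · intro u hu
    exact hT'A ⟨hu.1, hu.2.trans_eq h.symm⟩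
  · exfalso
    have hx : ψ T' ∈ s := (hψ T' hT'mem).1
    obtain ⟨ε, hε, K, hK⟩ := hloc T' hT'mem (ψ T') hx
    obtain ⟨η₁, hη₁, hc₁⟩ := Metric.continuousWithinAt_iff.1 (hψc T' hT'mem) ε hε
    obtain ⟨η₂, hη₂, hc₂⟩ := Metric.continuousWithinAt_iff.1 (hαc T' hT'mem) ε hε
    set η := min (min η₁ η₂) ε with hη
    have hηpos : 0 < η := lt_min (lt_min hη₁ hη₂) hε
    set b' := min b (T' + η / 2) with hb'
    have hT'b' : T' < b' := lt_min h (by linarith)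
    have hb'b : b' ≤ b := min_le_left _ _
    have hsub2 : Icc T' b' ⊆ Icc a b := fun z hz => ⟨haT'.trans hz.1, hz.2.trans hb'b⟩
    have hdist : ∀ u ∈ Icc T' b', |u - T'| < η := by
      intro u hu
      rw [abs_of_nonneg (by linarith [hu.1])]
      have : u ≤ T' + η / 2 := hu.2.trans (min_le_right _ _)
      linarith
    set vv : ℝ → E → E := fun t x => if t ∈ Icc a b ∧ |t - T'| < ε then v t x else 0 with hvv
    have hvvlip : ∀ t, LipschitzOnWith K (vv t) (s ∩ ball (ψ T') ε) := by
      intro t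
      by_cases hcond : t ∈ Icc a b ∧ |t - T'| < ε
      · have h1 := hK t hcond.1 hcond.2
        have h2 : vv t = v t := by funext x; simp only [hvv]; rw [if_pos hcond]
        rwa [h2]
      · have h2 : vv t = fun _ => (0:E) := by funext x; simp only [hvv]; rw [if_neg hcond]
        rw [h2]
        exact ((LipschitzWith.const (0:E)).weaken (by positivity)).lipschitzOnWith
    have key : EqOn ψ α (Icc T' b') := by
      apply ODE_solution_unique_of_mem_Icc_right (fun t _ => hvvlip t)
        (hψc.mono hsub2) ?_ ?_ (hαc.mono hsub2) ?_ ?_ hT'eq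
      · intro u hu
        have huab : u ∈ Icc a b := hsub2 (Ico_subset_Icc_self hu)
        have hcond : u ∈ Icc a b ∧ |u - T'| < ε := ⟨huab,
          (hdist u (Ico_subset_Icc_self hu)).trans_le (min_le_right _ _)⟩
        have hd : HasDerivWithinAt ψ (v u (ψ u)) (Ici u) u :=
          ((hψ u huab).2).mono_of_mem_nhdsWithin (Icc_mem_nhdsGE_of_mem ⟨huab.1, hu.2.trans_le hb'b⟩)
        have h2 : vv u (ψ u) = v u (ψ u) := by simp only [hvv]; rw [if_pos hcond]
        rwa [h2]
      · intro u hu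
        have huab : u ∈ Icc a b := hsub2 (Ico_subset_Icc_self hu)
        have hun : |u - T'| < η := hdist u (Ico_subset_Icc_self hu)
        refine ⟨(hψ u huab).1, ?_⟩
        rw [mem_ball]
        exact hc₁ huab (by
          rw [Real.dist_eq]
          exact hun.trans_le ((min_le_left _ _).trans (min_le_left _ _)))
      · intro u hu
        have huab : u ∈ Icc a b := hsub2 (Ico_subset_Icc_self hu)
        have hcond : u ∈ Icc a b ∧ |u - T'| < ε := ⟨huab,
          (hdist u (Ico_subset_Icc_self hu)).trans_le (min_le_right _ _)⟩
        have hd : HasDerivWithinAt α (v u (α u)) (Ici u) u :=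
          ((hα u huab).2).mono_of_mem_nhdsWithin (Icc_mem_nhdsGE_of_mem ⟨huab.1, hu.2.trans_le hb'b⟩)
        have h2 : vv u (α u) = v u (α u) := by simp only [hvv]; rw [if_pos hcond]
        rwa [h2]
      · intro u hu
        have huab : u ∈ Icc a b := hsub2 (Ico_subset_Icc_self hu)
        have hun : |u - T'| < η := hdist u (Ico_subset_Icc_self hu)
        refine ⟨(hα u huab).1, ?_⟩
        rw [mem_ball, hT'eq]
        exact hc₂ huab (by
          rw [Real.dist_eq]
          exact hun.trans_le ((min_le_left _ _).trans (min_le_right _ _)))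
    have hb'A : b' ∈ A := by
      refine ⟨⟨haT'.trans hT'b'.le, hb'b⟩, ?_⟩
      intro u hu
      rcases le_or_gt u T' with h' | h'
      · exact hT'A ⟨hu.1, h'⟩
      · exact key ⟨h'.le, hu.2⟩
    exact absurd (le_csSup hAbdd hb'A) (not_le.2 hT'b')






/-- Two-sided uniqueness on `Icc c d` with initial time `τ₀ ∈ Icc c d`. -/
lemma myUniqIcc {v : ℝ → E → E} {s : Set E} {c d τ₀ : ℝ} (hτ₀ : τ₀ ∈ Icc c d)
    (hloc : ∀ T ∈ Icc c d, ∀ x ∈ s, ∃ ε > (0:ℝ), ∃ K : NNReal,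
      ∀ t ∈ Icc c d, |t - T| < ε → LipschitzOnWith K (v t) (s ∩ ball x ε))
    {ψ α : ℝ → E}
    (hψ : ∀ t ∈ Icc c d, ψ t ∈ s ∧ HasDerivWithinAt ψ (v t (ψ t)) (Icc c d) t)
    (hα : ∀ t ∈ Icc c d, α t ∈ s ∧ HasDerivWithinAt α (v t (α t)) (Icc c d) t)
    (heq : ψ τ₀ = α τ₀) : EqOn ψ α (Icc c d) := by
  have hsubR : Icc τ₀ d ⊆ Icc c d := Icc_subset_Icc hτ₀.1 le_rfl
  have hsubL : Icc c τ₀ ⊆ Icc c d := Icc_subset_Icc le_rfl hτ₀.2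
  -- right part
  have hR : EqOn ψ α (Icc τ₀ d) := by
    apply myUniqRight (v := v) (s := s)
      (fun T hT x hx => by
        obtain ⟨ε, hε, K, hK⟩ := hloc T (hsubR hT) x hx
        exact ⟨ε, hε, K, fun t ht h => hK t (hsubR ht) h⟩)
      (fun t ht => ⟨(hψ t (hsubR ht)).1, ((hψ t (hsubR ht)).2).mono hsubR⟩)
      (fun t ht => ⟨(hα t (hsubR ht)).1, ((hα t (hsubR ht)).2).mono hsubR⟩)
      hτ₀.2 heq
  -- left part, by time reversal
  have hL : EqOn ψ α (Icc c τ₀) := by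
    set ψ' : ℝ → E := fun t => ψ (-t) with hψ'
    set α' : ℝ → E := fun t => α (-t) with hα'
    set v' : ℝ → E → E := fun t x => -(v (-t) x) with hv'
    have hmem : ∀ t ∈ Icc (-τ₀) (-c), -t ∈ Icc c d := by
      intro t ht
      constructor <;> [linarith [ht.2]; linarith [ht.1, hτ₀.2]]
    have hmaps : MapsTo Neg.neg (Icc (-τ₀) (-c)) (Icc c d) := fun t ht => hmem t ht
    have hderiv : ∀ (β : ℝ → E), (∀ t ∈ Icc c d, β t ∈ s ∧
        HasDerivWithinAt β (v t (β t)) (Icc c d) t) →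
        ∀ t ∈ Icc (-τ₀) (-c), (fun u => β (-u)) t ∈ s ∧
          HasDerivWithinAt (fun u => β (-u)) (v' t ((fun u => β (-u)) t)) (Icc (-τ₀) (-c)) t := by
      intro β hβ t ht
      refine ⟨(hβ (-t) (hmem t ht)).1, ?_⟩
      have h1 : HasDerivWithinAt β (v (-t) (β (-t))) (Icc c d) (-t) := (hβ (-t) (hmem t ht)).2
      have h2 : HasDerivWithinAt (fun u : ℝ => -u) (-1 : ℝ) (Icc (-τ₀) (-c)) t :=
        (hasDerivAt_neg t).hasDerivWithinAt
      have h3 := HasDerivWithinAt.scomp t h1 h2 hmaps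
      simpa [hv', Function.comp_def] using h3
    have key : EqOn ψ' α' (Icc (-τ₀) (-c)) := by
      apply myUniqRight (v := v') (s := s)
        (fun T hT x hx => by
          obtain ⟨ε, hε, K, hK⟩ := hloc (-T) (hmem T hT) x hx
          refine ⟨ε, hε, K, fun t ht h => ?_⟩
          have h4 := hK (-t) (hmem t ht) (by rw [neg_sub_neg, abs_sub_comm]; exact h)
          have : v' t = Neg.neg ∘ (v (-t)) := by funext y; simp [hv']
          rw [this, ← one_mul K]
          exact LipschitzWith.id.neg.comp_lipschitzOnWith h4)
        (hderiv ψ hψ) (hderiv α hα) (neg_le_neg hτ₀.1) (by simpa [hψ', hα'] using heq)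
    intro u hu
    have : -u ∈ Icc (-τ₀) (-c) := ⟨neg_le_neg hu.2, neg_le_neg hu.1⟩
    simpa [hψ', hα'] using key this
  intro u hu
  rcases le_or_gt u τ₀ with h | h
  · exact hL ⟨hu.1, h⟩
  · exact hR ⟨h.le, hu.2⟩





lemma myWeaken {f : E → E} {s : Set E} {K K' : NNReal} (h : LipschitzOnWith K f s)
    (hKK : K ≤ K') : LipschitzOnWith K' f s := fun x hx y hy =>
  (h hx hy).trans (mul_le_mul_left (ENNReal.coe_le_coe.2 hKK) _)

/-- Two-sided approximate-Grönwall estimate on `Icc c d` with initial time `τ₀`. -/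
lemma myGronTwo {v : ℝ → E → E} {S : Set E} {K : NNReal} {c d τ₀ : ℝ}
    (hτ₀ : τ₀ ∈ Icc c d)
    (hv : ∀ t ∈ Icc c d, LipschitzOnWith K (v t) S)
    {ψ α ψD : ℝ → E} {εψ δ₀ : ℝ} (hεψ : 0 ≤ εψ) (hδ₀ : 0 ≤ δ₀)
    (hψm : ∀ t ∈ Icc c d, ψ t ∈ S) (hαm : ∀ t ∈ Icc c d, α t ∈ S)
    (hψd : ∀ t ∈ Icc c d, HasDerivWithinAt ψ (ψD t) (Icc c d) t)
    (hαd : ∀ t ∈ Icc c d, HasDerivWithinAt α (v t (α t)) (Icc c d) t)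
    (hb : ∀ t ∈ Icc c d, dist (ψD t) (v t (ψ t)) ≤ εψ)
    (h0 : dist (ψ τ₀) (α τ₀) ≤ δ₀) :
    ∀ t ∈ Icc c d, dist (ψ t) (α t) ≤ (δ₀ + εψ) * Real.exp ((K + 1) * (d - c)) := by
  have hψc : ContinuousOn ψ (Icc c d) := fun t ht => (hψd t ht).continuousWithinAt
  have hαc : ContinuousOn α (Icc c d) := fun t ht => (hαd t ht).continuousWithinAt
  set K' : NNReal := K + 1 with hK'
  have hK'1 : (1:ℝ) ≤ (K' : ℝ) := by simp [hK']
  have hK'0 : (K' : ℝ) ≠ 0 := by positivity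
  have hcd : c ≤ d := hτ₀.1.trans hτ₀.2
  -- the common numerical bound
  have bnd : ∀ x : ℝ, 0 ≤ x → x ≤ d - c →
      gronwallBound δ₀ K' (εψ + 0) x ≤ (δ₀ + εψ) * Real.exp ((K + 1) * (d - c)) := by
    intro x hx hxd
    rw [add_zero, gronwallBound_of_K_ne_0 hK'0]
    have hA1 : 1 ≤ Real.exp (K' * x) := Real.one_le_exp (by positivity)
    have hAB : Real.exp (K' * x) ≤ Real.exp (K' * (d - c)) := by
      apply Real.exp_le_exp.2
      exact mul_le_mul_of_nonneg_left hxd (by positivity)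
    have hBpos : 0 < Real.exp (K' * (d - c)) := Real.exp_pos _
    have hdiv : εψ / K' ≤ εψ := div_le_self hεψ hK'1
    have hcast : ((K':ℝ)) = (K:ℝ) + 1 := by simp [hK']
    rw [← hcast]
    nlinarith [mul_le_mul_of_nonneg_left hAB hδ₀, Real.exp_pos (K' * x),
      mul_le_mul_of_nonneg_right hdiv (sub_nonneg.2 hA1),
      mul_le_mul_of_nonneg_left (sub_le_sub_right hAB 1) hεψ]
  -- totalized vector field and Lipschitz family
  set vv : ℝ → E → E := fun t x => if t ∈ Icc c d then v t x else 0 with hvv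
  have hvvlip : ∀ t, LipschitzOnWith K' (vv t) S := by
    intro t
    by_cases hcond : t ∈ Icc c d
    · have h2 : vv t = v t := by funext x; simp only [hvv]; rw [if_pos hcond]
      rw [h2]; exact myWeaken (hv t hcond) (by simp [hK'])
    · have h2 : vv t = fun _ => (0:E) := by funext x; simp only [hvv]; rw [if_neg hcond]
      rw [h2]; exact ((LipschitzWith.const (0:E)).weaken (by positivity)).lipschitzOnWith
  -- forward estimate
  have hfwd : ∀ t ∈ Icc τ₀ d, dist (ψ t) (α t) ≤ gronwallBound δ₀ K' (εψ + 0) (t - τ₀) := by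
    have hsub : Icc τ₀ d ⊆ Icc c d := Icc_subset_Icc hτ₀.1 le_rfl
    refine dist_le_of_approx_trajectories_ODE_of_mem (v := vv) (s := fun _ => S)
      (K := K') (f' := ψD) (g' := fun t => vv t (α t)) (εf := εψ) (εg := 0) (δ := δ₀)
      (fun t _ => hvvlip t) (hψc.mono hsub) ?_ ?_ ?_ (hαc.mono hsub) ?_ ?_ ?_ h0
    · intro t ht
      have htc : t ∈ Icc c d := hsub (Ico_subset_Icc_self ht)
      exact (hψd t htc).mono_of_mem_nhdsWithin (Icc_mem_nhdsGE_of_mem ⟨htc.1, ht.2⟩)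
    · intro t ht
      have htc : t ∈ Icc c d := hsub (Ico_subset_Icc_self ht)
      have : vv t (ψ t) = v t (ψ t) := by simp only [hvv]; rw [if_pos htc]
      rw [this]; exact hb t htc
    · intro t ht; exact hψm t (hsub (Ico_subset_Icc_self ht))
    · intro t ht
      have htc : t ∈ Icc c d := hsub (Ico_subset_Icc_self ht)
      have hd := (hαd t htc).mono_of_mem_nhdsWithin (Icc_mem_nhdsGE_of_mem ⟨htc.1, ht.2⟩)
      have : vv t (α t) = v t (α t) := by simp only [hvv]; rw [if_pos htc]
      rwa [← this] at hd
    · intro t ht; simp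
    · intro t ht; exact hαm t (hsub (Ico_subset_Icc_self ht))
  -- backward estimate, by time reversal
  have hbwd : ∀ t ∈ Icc c τ₀, dist (ψ t) (α t) ≤ gronwallBound δ₀ K' (εψ + 0) (τ₀ - t) := by
    have hmem : ∀ t ∈ Icc (-τ₀) (-c), -t ∈ Icc c d := by
      intro t ht
      constructor <;> [linarith [ht.2]; linarith [ht.1, hτ₀.2]]
    have hmaps : MapsTo Neg.neg (Icc (-τ₀) (-c)) (Icc c d) := fun t ht => hmem t ht
    set vv' : ℝ → E → E := fun t x => -(vv (-t) x) with hvv'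
    have hvvlip' : ∀ t, LipschitzOnWith K' (vv' t) S := by
      intro t
      have : vv' t = Neg.neg ∘ (vv (-t)) := by funext y; simp [hvv']
      rw [this, ← one_mul K']
      exact LipschitzWith.id.neg.comp_lipschitzOnWith (hvvlip (-t))
    have hder : ∀ (β βD : ℝ → E), (∀ t ∈ Icc c d, HasDerivWithinAt β (βD t) (Icc c d) t) →
        ∀ t ∈ Ico (-τ₀) (-c), HasDerivWithinAt (fun u => β (-u)) (-(βD (-t))) (Ici t) t := by
      intro β βD hβ t ht
      have htc : -t ∈ Icc c d := hmem t (Ico_subset_Icc_self ht)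
      have h1 : HasDerivWithinAt β (βD (-t)) (Iic (-t)) (-t) :=
        (hβ (-t) htc).mono_of_mem_nhdsWithin (Icc_mem_nhdsLE_of_mem ⟨lt_of_lt_of_le (by linarith [ht.2]) le_rfl, htc.2⟩)
      have h2 : HasDerivWithinAt (fun u : ℝ => -u) (-1 : ℝ) (Ici t) t :=
        (hasDerivAt_neg t).hasDerivWithinAt
      have hmaps2 : MapsTo (fun u : ℝ => -u) (Ici t) (Iic (-t)) := fun u hu => by
        simp only [mem_Iic]; exact neg_le_neg hu
      have h3 := HasDerivWithinAt.scomp t h1 h2 hmaps2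
      simpa [Function.comp_def] using h3
    have hcont : ∀ (β : ℝ → E), ContinuousOn β (Icc c d) →
        ContinuousOn (fun u => β (-u)) (Icc (-τ₀) (-c)) := by
      intro β hβ
      exact hβ.comp continuousOn_neg hmaps
    have key : ∀ u ∈ Icc (-τ₀) (-c), dist (ψ (-u)) (α (-u)) ≤
        gronwallBound δ₀ K' (εψ + 0) (u - (-τ₀)) := by
      refine dist_le_of_approx_trajectories_ODE_of_mem (v := vv') (s := fun _ => S)
        (K := K') (f' := fun t => -(ψD (-t))) (g' := fun t => vv' t (α (-t)))
        (εf := εψ) (εg := 0) (δ := δ₀)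
        (fun t _ => hvvlip' t) (hcont ψ hψc) (hder ψ ψD hψd) ?_ ?_ (hcont α hαc) ?_ ?_ ?_
        (by simpa using h0)
      · intro t ht
        have htc : -t ∈ Icc c d := hmem t (Ico_subset_Icc_self ht)
        have : vv' t (ψ (-t)) = -(v (-t) (ψ (-t))) := by
          simp only [hvv', hvv]; rw [if_pos htc]
        rw [this, dist_neg_neg]
        exact hb (-t) htc
      · intro t ht; exact hψm (-t) (hmem t (Ico_subset_Icc_self ht))
      · intro t ht
        have htc : -t ∈ Icc c d := hmem t (Ico_subset_Icc_self ht)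
        have hd := hder α (fun u => v u (α u)) hαd t ht
        show HasDerivWithinAt (fun u => α (-u)) (vv' t (α (-t))) (Ici t) t
        have heq2 : vv' t (α (-t)) = -(v (-t) (α (-t))) := by
          simp only [hvv', hvv]; rw [if_pos htc]
        rw [heq2]
        exact hd
      · intro t ht; simp
      · intro t ht; exact hαm (-t) (hmem t (Ico_subset_Icc_self ht))
    intro t ht
    have : -t ∈ Icc (-τ₀) (-c) := ⟨neg_le_neg ht.2, neg_le_neg ht.1⟩
    have := key (-t) this
    simpa [neg_add_eq_sub] using this
  intro t ht
  rcases le_or_gt t τ₀ with h | h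
  · exact (hbwd t ⟨ht.1, h⟩).trans (bnd _ (by linarith) (by linarith [ht.1, hτ₀.2]))
  · exact (hfwd t ⟨h.le, ht.2⟩).trans (bnd _ (by linarith) (by linarith [ht.2, hτ₀.1]))



lemma myInterval {J : Set ℝ} (hJint : J.OrdConnected)
    (hJnd : ∃ a ∈ J, ∃ b ∈ J, a ≠ b) {t₀ : ℝ} (ht₀ : t₀ ∈ J) {a : ℝ} (ha : 0 < a) :
    ∃ c d : ℝ, c ≤ t₀ ∧ t₀ ≤ d ∧ c < d ∧ t₀ - a ≤ c ∧ d ≤ t₀ + a ∧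
      Icc c d ⊆ J ∧ Icc c d ∈ nhdsWithin t₀ J := by
  by_cases hL : ∃ s ∈ J, s < t₀
  · obtain ⟨s, hsJ, hs⟩ := hL
    set c := max s (t₀ - a) with hc
    have hcJ : c ∈ J := hJint.out hsJ ht₀ ⟨le_max_left _ _, max_le hs.le (by linarith)⟩
    have hct₀ : c < t₀ := max_lt hs (by linarith)
    by_cases hR : ∃ s' ∈ J, t₀ < s'
    · obtain ⟨s', hs'J, hs'⟩ := hR
      set d := min s' (t₀ + a) with hd
      have hdJ : d ∈ J := hJint.out ht₀ hs'J ⟨le_min hs'.le (by linarith), min_le_left _ _⟩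
      have htd : t₀ < d := lt_min hs' (by linarith)
      refine ⟨c, d, hct₀.le, htd.le, hct₀.trans htd, le_max_right _ _, min_le_right _ _,
        hJint.out hcJ hdJ, ?_⟩
      exact mem_nhdsWithin.2 ⟨Ioo c d, isOpen_Ioo, ⟨hct₀, htd⟩,
        fun z hz => Ioo_subset_Icc_self hz.1⟩
    · push_neg at hR
      refine ⟨c, t₀, hct₀.le, le_rfl, hct₀, le_max_right _ _, by linarith,
        hJint.out hcJ ht₀, ?_⟩
      refine mem_nhdsWithin.2 ⟨Ioo c (t₀ + 1), isOpen_Ioo, ⟨hct₀, by linarith⟩, ?_⟩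
      rintro z ⟨hz1, hz2⟩
      exact ⟨hz1.1.le, hR z hz2⟩
  · push_neg at hL
    have hR : ∃ s' ∈ J, t₀ < s' := by
      obtain ⟨x, hxJ, y, hyJ, hxy⟩ := hJnd
      rcases lt_or_ge t₀ x with h | h
      · exact ⟨x, hxJ, h⟩
      rcases lt_or_ge t₀ y with h' | h'
      · exact ⟨y, hyJ, h'⟩
      have hx := hL x hxJ
      have hy := hL y hyJ
      exact absurd (le_antisymm h' (hy)) (by
        have := le_antisymm h (hx)
        intro hcon
        exact hxy (by linarith))
    obtain ⟨s', hs'J, hs'⟩ := hR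
    set d := min s' (t₀ + a) with hd
    have hdJ : d ∈ J := hJint.out ht₀ hs'J ⟨le_min hs'.le (by linarith), min_le_left _ _⟩
    have htd : t₀ < d := lt_min hs' (by linarith)
    refine ⟨t₀, d, le_rfl, htd.le, htd, by linarith, min_le_right _ _,
      hJint.out ht₀ hdJ, ?_⟩
    refine mem_nhdsWithin.2 ⟨Ioo (t₀ - 1) d, isOpen_Ioo, ⟨by linarith, htd⟩, ?_⟩
    rintro z ⟨hz1, hz2⟩
    exact ⟨hL z hz2, hz1.2.le⟩

variable [CompleteSpace E]




/-- Existence with the extra information that the solution stays in the closed ball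
and is globally continuous. -/
lemma myExists {v : ℝ → E → E} {c d τ₀ : ℝ} {x₀ : E} {C R : ℝ} {L : NNReal}
    (hτ₀ : τ₀ ∈ Icc c d) (hR : 0 ≤ R) (hC : 0 ≤ C)
    (hlip : ∀ t ∈ Icc c d, LipschitzOnWith L (v t) (closedBall x₀ R))
    (hcont : ∀ x ∈ closedBall x₀ R, ContinuousOn (fun t => v t x) (Icc c d))
    (hnorm : ∀ t ∈ Icc c d, ∀ x ∈ closedBall x₀ R, ‖v t x‖ ≤ C)
    (hmul : C * max (d - τ₀) (τ₀ - c) ≤ R) :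
    ∃ α : ℝ → E, Continuous α ∧ α τ₀ = x₀ ∧ (∀ t, α t ∈ closedBall x₀ R) ∧
      ∀ t ∈ Icc c d, HasDerivWithinAt α (v t (α t)) (Icc c d) t := by
  lift R to NNReal using hR
  lift C to NNReal using hC
  have hf : IsPicardLindelof v (⟨τ₀, hτ₀⟩ : Icc c d) x₀ R 0 C L :=
    { lipschitzOnWith := hlip
      continuousOn := hcont
      norm_le := hnorm
      mul_max_le := by simpa using hmul }
  obtain ⟨α, hα⟩ := ODE.FunSpace.exists_isFixedPt_next hf (mem_closedBall_self le_rfl)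
  refine ⟨α.compProj, α.continuous_compProj, ?_, ?_, ?_⟩
  · have := ODE.FunSpace.next_apply₀ hf (mem_closedBall_self le_rfl) α
    rw [hα] at this
    rw [ODE.FunSpace.compProj_of_mem hτ₀]
    exact this
  · intro t
    exact α.compProj_mem_closedBall hf.mul_max_le
  · intro t ht
    apply ODE.hasDerivWithinAt_picard_Icc hτ₀ hf.continuousOn_uncurry
      α.continuous_compProj.continuousOn (fun _ ht' ↦ α.compProj_mem_closedBall hf.mul_max_le)
      x₀ ht |>.congr_of_mem _ ht
    intro t' ht'
    nth_rw 1 [← hα]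
    rw [ODE.FunSpace.compProj_of_mem ht', ODE.FunSpace.next_apply]
end PDPLhelpers









/-- Parameter-dependent Picard–Lindelöf: for a continuous right-hand side
`f : J × U × P → E` which is locally Lipschitz in the `U`-variable, uniformly
in the other variables near each point, there exist, around any
`(t₀,z₀,q₀)`, neighbourhoods `J₀, U₀, P₀` such that each initial value
problem `x' = f(t,x,p₀)`, `x(τ₀) = x₀` with data in `J₀ × U₀ × P₀` has a
unique solution on `J₀`, and for each fixed `τ₀` the solution depends
continuously on `(t, x₀, p₀)`. -/
theorem stmt10
    {E Z : Type*} [NormedAddCommGroup E] [NormedSpace ℝ E] [CompleteSpace E]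
    [NormedAddCommGroup Z] [NormedSpace ℝ Z]
    (J : Set ℝ) (hJint : J.OrdConnected)
    (hJnd : ∃ a ∈ J, ∃ b ∈ J, a ≠ b)
    {U : Set E} {P : Set Z} (hU : IsOpen U) (hP : IsOpen P)
    (f : ℝ × E × Z → E)
    (hfc : ContinuousOn f (J ×ˢ U ×ˢ P))
    (hfLip : ∀ t ∈ J, ∀ x ∈ U, ∀ p ∈ P, ∃ ε > (0:ℝ), ∃ L : ℝ,
      ∀ t' ∈ J, ∀ p' ∈ P, ∀ x' ∈ U, ∀ y' ∈ U,
        |t' - t| < ε → ‖p' - p‖ < ε → ‖x' - x‖ < ε → ‖y' - x‖ < ε →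
          ‖f (t', x', p') - f (t', y', p')‖ ≤ L * ‖x' - y'‖) :
    ∀ t₀ ∈ J, ∀ z₀ ∈ U, ∀ q₀ ∈ P,
      ∃ J₀ : Set ℝ, J₀ ⊆ J ∧ Convex ℝ J₀ ∧ J₀ ∈ nhdsWithin t₀ J ∧
      ∃ U₀ : Set E, IsOpen U₀ ∧ z₀ ∈ U₀ ∧ U₀ ⊆ U ∧
      ∃ P₀ : Set Z, IsOpen P₀ ∧ q₀ ∈ P₀ ∧ P₀ ⊆ P ∧
      ∃ φ : ℝ → ℝ → E → Z → E,
        (∀ τ₀ ∈ J₀, ∀ x₀ ∈ U₀, ∀ p₀ ∈ P₀,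
          -- φ τ₀ · x₀ p₀ solves the IVP on J₀
          (φ τ₀ τ₀ x₀ p₀ = x₀ ∧
            ∀ t ∈ J₀, φ τ₀ t x₀ p₀ ∈ U ∧
              HasDerivWithinAt (fun s => φ τ₀ s x₀ p₀)
                (f (t, φ τ₀ t x₀ p₀, p₀)) J₀ t) ∧
          -- uniqueness of the solution
          (∀ ψ : ℝ → E, ψ τ₀ = x₀ →
            (∀ t ∈ J₀, ψ t ∈ U ∧
              HasDerivWithinAt ψ (f (t, ψ t, p₀)) J₀ t) →
            ∀ t ∈ J₀, ψ t = φ τ₀ t x₀ p₀)) ∧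
        -- continuous dependence for fixed τ₀
        (∀ τ₀ ∈ J₀, ContinuousOn
          (fun q : ℝ × E × Z => φ τ₀ q.1 q.2.1 q.2.2)
          (J₀ ×ˢ U₀ ×ˢ P₀)) := by
  intro t₀ ht₀J z₀ hz₀U q₀ hq₀P
  -- basic neighbourhood data
  obtain ⟨rU, hrU, hballU⟩ := Metric.isOpen_iff.1 hU z₀ hz₀U
  obtain ⟨rP, hrP, hballP⟩ := Metric.isOpen_iff.1 hP q₀ hq₀P
  obtain ⟨ε, hε, L₀, hLip⟩ := hfLip t₀ ht₀J z₀ hz₀U q₀ hq₀P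
  set L : NNReal := Real.toNNReal L₀ with hL
  obtain ⟨δ, hδ, hCb⟩ :=
    Metric.continuousWithinAt_iff.1 (hfc (t₀, z₀, q₀) ⟨ht₀J, hz₀U, hq₀P⟩) 1 one_pos
  set C : ℝ := ‖f (t₀, z₀, q₀)‖ + 1 with hC
  have hC1 : 1 ≤ C := by rw [hC]; linarith [norm_nonneg (f (t₀, z₀, q₀))]
  have hC0 : 0 < C := by positivity
  set r : ℝ := min (min ε δ) (min rU rP) / 4 with hr
  have hr0 : 0 < r := by positivity
  have hrε : 4 * r ≤ ε := by
    have h1 : min (min ε δ) (min rU rP) ≤ ε := (min_le_left _ _).trans (min_le_left _ _)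
    rw [hr]; linarith
  have hrδ : 4 * r ≤ δ := by
    have h1 : min (min ε δ) (min rU rP) ≤ δ := (min_le_left _ _).trans (min_le_right _ _)
    rw [hr]; linarith
  have hrU4 : 4 * r ≤ rU := by
    have h1 : min (min ε δ) (min rU rP) ≤ rU := (min_le_right _ _).trans (min_le_left _ _)
    rw [hr]; linarith
  have hrP4 : 4 * r ≤ rP := by
    have h1 : min (min ε δ) (min rU rP) ≤ rP := (min_le_right _ _).trans (min_le_right _ _)
    rw [hr]; linarith
  set a : ℝ := r / C with haa
  have ha0 : 0 < a := by positivity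
  have har : a ≤ r := by
    rw [haa]
    calc r / C ≤ r / 1 := by gcongr
    _ = r := div_one r
  obtain ⟨c, d, hct₀, ht₀d, hcd, hca, hda, hIccJ, hIccnhds⟩ :=
    myInterval hJint hJnd ht₀J ha0
  set S : Set E := closedBall z₀ (3 * r) with hS
  have hSU : S ⊆ U := by
    refine subset_trans ?_ hballU
    intro x hx
    rw [mem_closedBall] at hx
    rw [mem_ball]
    linarith
  have hU₀U : ball z₀ r ⊆ U := fun x hx => hballU (by rw [mem_ball] at *; linarith)
  have hP₀P : ball q₀ r ⊆ P := fun x hx => hballP (by rw [mem_ball] at *; linarith)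
  have htJ : ∀ t ∈ Icc c d, t ∈ J := fun t ht => hIccJ ht
  have htt₀ : ∀ t ∈ Icc c d, |t - t₀| ≤ a := by
    intro t ht
    rw [abs_le]
    constructor <;> [linarith [ht.1]; linarith [ht.2]]
  -- Lipschitz on the common region S
  have hLipS : ∀ t ∈ Icc c d, ∀ p ∈ ball q₀ r, LipschitzOnWith L (fun x => f (t, x, p)) S := by
    intro t ht p hp
    rw [lipschitzOnWith_iff_dist_le_mul]
    intro x hx y hy
    rw [dist_eq_norm, dist_eq_norm]
    have hx3 : ‖x - z₀‖ ≤ 3 * r := by rw [← dist_eq_norm]; exact hx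
    have hy3 : ‖y - z₀‖ ≤ 3 * r := by rw [← dist_eq_norm]; exact hy
    have hp' : ‖p - q₀‖ < r := by rw [← dist_eq_norm]; exact hp
    have h := hLip t (htJ t ht) p (hP₀P hp) x (hSU hx) y (hSU hy)
      (lt_of_le_of_lt (htt₀ t ht) (by linarith))
      (by linarith) (by linarith) (by linarith)
    refine h.trans ?_
    have : L₀ ≤ (L : ℝ) := Real.le_coe_toNNReal L₀
    exact mul_le_mul_of_nonneg_right this (norm_nonneg _)
  -- norm bound on the common region S
  have hBndS : ∀ t ∈ Icc c d, ∀ p ∈ ball q₀ r, ∀ x ∈ S, ‖f (t, x, p)‖ ≤ C := by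
    intro t ht p hp x hx
    have hd : dist ((t, x, p) : ℝ × E × Z) (t₀, z₀, q₀) < δ := by
      rw [Prod.dist_eq]
      apply max_lt
      · rw [Real.dist_eq]; exact lt_of_le_of_lt (htt₀ t ht) (by linarith)
      · rw [Prod.dist_eq]
        apply max_lt
        · exact lt_of_le_of_lt hx (by linarith)
        · exact lt_trans hp (by linarith)
    have h := hCb ⟨htJ t ht, hSU hx, hP₀P hp⟩ hd
    rw [dist_eq_norm] at h
    have h2 : ‖f (t, x, p)‖ - ‖f (t₀, z₀, q₀)‖ ≤ ‖f (t, x, p) - f (t₀, z₀, q₀)‖ :=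
      norm_sub_norm_le _ _
    rw [hC]; linarith
  -- existence, packaged for `choose!`
  have hex : ∀ (τ₀ : ℝ) (x₀ : E) (p₀ : Z), τ₀ ∈ Icc c d → x₀ ∈ ball z₀ r → p₀ ∈ ball q₀ r →
      ∃ α : ℝ → E, Continuous α ∧ α τ₀ = x₀ ∧ (∀ t, α t ∈ closedBall x₀ (2 * r)) ∧
        ∀ t ∈ Icc c d, HasDerivWithinAt α (f (t, α t, p₀)) (Icc c d) t := by
    intro τ₀ x₀ p₀ hτ₀ hx₀ hp₀
    have hball : closedBall x₀ (2 * r) ⊆ S := by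
      intro y hy
      rw [mem_closedBall] at *
      have := dist_triangle y x₀ z₀
      have hx₀' : dist x₀ z₀ < r := hx₀
      show dist y z₀ ≤ 3 * r
      linarith
    exact myExists (v := fun t x => f (t, x, p₀)) hτ₀ (by positivity) hC0.le
        (fun t ht => (hLipS t ht p₀ hp₀).mono hball)
        (by
          intro x hx
          have hmaps : MapsTo (fun t : ℝ => ((t, x, p₀) : ℝ × E × Z)) (Icc c d)
              (J ×ˢ U ×ˢ P) := fun t ht => ⟨htJ t ht, hSU (hball hx), hP₀P hp₀⟩
          exact hfc.comp ((continuous_id.prodMk continuous_const).continuousOn) hmaps)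
        (fun t ht x hx => hBndS t ht p₀ hp₀ x (hball hx))
        (by
          have h1 : max (d - τ₀) (τ₀ - c) ≤ 2 * a := by
            apply max_le <;> [linarith [hτ₀.1]; linarith [hτ₀.2]]
          calc C * max (d - τ₀) (τ₀ - c) ≤ C * (2 * a) := by
                exact mul_le_mul_of_nonneg_left h1 hC0.le
          _ = 2 * r := by rw [haa]; field_simp)
  choose! sol hsolc hsol0 hsolball hsolderiv using hex
  -- the subset relation cB x₀ 2r ⊆ S for x₀ ∈ U₀
  have hballS : ∀ x₀ ∈ ball z₀ r, closedBall x₀ (2 * r) ⊆ S := by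
    intro x₀ hx₀ y hy
    rw [mem_closedBall] at *
    have := dist_triangle y x₀ z₀
    have hx₀' : dist x₀ z₀ < r := hx₀
    show dist y z₀ ≤ 3 * r
    linarith
  refine ⟨Icc c d, hIccJ, convex_Icc c d, hIccnhds,
    ball z₀ r, isOpen_ball, mem_ball_self hr0, hU₀U,
    ball q₀ r, isOpen_ball, mem_ball_self hr0, hP₀P,
    fun τ₀ t x₀ p₀ => sol τ₀ x₀ p₀ t, ?_, ?_⟩
  · intro τ₀ hτ₀ x₀ hx₀ p₀ hp₀
    have hs0 := hsol0 τ₀ x₀ p₀ hτ₀ hx₀ hp₀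
    have hsb := hsolball τ₀ x₀ p₀ hτ₀ hx₀ hp₀
    have hsd := hsolderiv τ₀ x₀ p₀ hτ₀ hx₀ hp₀
    have hmemU : ∀ t ∈ Icc c d, sol τ₀ x₀ p₀ t ∈ U :=
      fun t _ => hSU (hballS x₀ hx₀ (hsb t))
    refine ⟨⟨hs0, fun t ht => ⟨hmemU t ht, hsd t ht⟩⟩, ?_⟩
    -- uniqueness
    intro ψ hψ0 hψ t ht
    have hloc : ∀ T ∈ Icc c d, ∀ x ∈ U, ∃ ε' > (0:ℝ), ∃ K : NNReal,
        ∀ u ∈ Icc c d, |u - T| < ε' →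
          LipschitzOnWith K (fun y => f (u, y, p₀)) (U ∩ ball x ε') := by
      intro T hT x hx
      obtain ⟨ε₂, hε₂, L₂, hL₂⟩ := hfLip T (htJ T hT) x hx p₀ (hP₀P hp₀)
      refine ⟨ε₂, hε₂, Real.toNNReal L₂, ?_⟩
      intro u hu habs
      rw [lipschitzOnWith_iff_dist_le_mul]
      intro y hy z hz
      rw [dist_eq_norm, dist_eq_norm]
      have h := hL₂ u (htJ u hu) p₀ (hP₀P hp₀) y hy.1 z hz.1 habs
        (by simpa using hε₂)
        (by rw [← dist_eq_norm]; exact hy.2) (by rw [← dist_eq_norm]; exact hz.2)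
      refine h.trans (mul_le_mul_of_nonneg_right (Real.le_coe_toNNReal L₂) (norm_nonneg _))
    have := myUniqIcc hτ₀ hloc hψ
      (fun u hu => ⟨hmemU u hu, hsd u hu⟩) (by rw [hψ0, hs0])
    exact this ht
  · -- continuity
    intro τ₀ hτ₀
    set M : ℝ := Real.exp (((L : ℝ) + 1) * (d - c)) with hM
    have hM1 : 1 ≤ M := Real.one_le_exp (mul_nonneg (by positivity) (by linarith))
    have hM0 : 0 < M := by linarith
    rintro ⟨tb, xb, pb⟩ ⟨htb, hxb, hpb⟩
    set β := sol τ₀ xb pb with hβ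
    have hβc : Continuous β := hsolc τ₀ xb pb hτ₀ hxb hpb
    have hβ0 : β τ₀ = xb := hsol0 τ₀ xb pb hτ₀ hxb hpb
    have hβball : ∀ t, β t ∈ closedBall xb (2 * r) := hsolball τ₀ xb pb hτ₀ hxb hpb
    have hβd : ∀ t ∈ Icc c d, HasDerivWithinAt β (f (t, β t, pb)) (Icc c d) t :=
      hsolderiv τ₀ xb pb hτ₀ hxb hpb
    rw [Metric.continuousWithinAt_iff]
    intro η hη
    set η' : ℝ := η / (4 * (M + 1)) with hη'
    have hη'0 : 0 < η' := by positivity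
    -- uniform closeness in the parameter over the compact time interval
    have hcomp : ∃ θP > (0:ℝ), ∀ p ∈ ball q₀ r, dist p pb < θP →
        ∀ s ∈ Icc c d, dist (f (s, β s, p)) (f (s, β s, pb)) ≤ η' := by
      have hGc : ContinuousOn (fun w : ℝ × Z => f (w.1, β w.1, w.2))
          (Icc c d ×ˢ ball q₀ r) := by
        apply hfc.comp
        · exact (continuous_fst.prodMk
            ((hβc.comp continuous_fst).prodMk continuous_snd)).continuousOn
        · intro w hw
          exact ⟨htJ _ hw.1, hSU (hballS xb hxb (hβball w.1)), hP₀P hw.2⟩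
      set D : ℝ × Z → ℝ := fun w => dist (f (w.1, β w.1, w.2)) (f (w.1, β w.1, pb)) with hD
      have hDc : ContinuousOn D (Icc c d ×ˢ ball q₀ r) := by
        have hmaps : MapsTo (fun w : ℝ × Z => ((w.1, pb) : ℝ × Z))
            (Icc c d ×ˢ ball q₀ r) (Icc c d ×ˢ ball q₀ r) := fun w hw => ⟨hw.1, hpb⟩
        exact continuous_dist.comp_continuousOn (hGc.prodMk
          (hGc.comp ((continuous_fst.prodMk continuous_const).continuousOn) hmaps))
      have hpt : ∀ s ∈ Icc c d, ∃ us : Set ℝ, IsOpen us ∧ s ∈ us ∧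
          ∃ vs : Set Z, IsOpen vs ∧ pb ∈ vs ∧
          ∀ w ∈ (us ×ˢ vs) ∩ (Icc c d ×ˢ ball q₀ r), D w < η' := by
        intro s hs
        have h1 : ContinuousWithinAt D (Icc c d ×ˢ ball q₀ r) (s, pb) := hDc (s, pb) ⟨hs, hpb⟩
        have h2 : D (s, pb) = 0 := dist_self _
        have h3 : D ⁻¹' Iio η' ∈ nhdsWithin (s, pb) (Icc c d ×ˢ ball q₀ r) :=
          h1 (Iio_mem_nhds (by rw [h2]; exact hη'0))
        rw [mem_nhdsWithin] at h3
        obtain ⟨O, hO, hmemO, hsubO⟩ := h3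
        obtain ⟨us, vs, hus, hvs, hsu, hpv, huv⟩ := isOpen_prod_iff.1 hO s pb hmemO
        exact ⟨us, hus, hsu, vs, hvs, hpv, fun w hw => hsubO ⟨huv hw.1, hw.2⟩⟩
      choose! us huso husm vs hvso hvsm hkey using hpt
      obtain ⟨T, hTsub, hTcov⟩ := isCompact_Icc.elim_nhds_subcover us
        (fun s hs => (huso s hs).mem_nhds (husm s hs))
      set V : Set Z := ⋂ s ∈ T, vs s with hV
      have hVo : IsOpen V := isOpen_biInter_finset (fun s hs => hvso s (hTsub s hs))
      have hVp : pb ∈ V := mem_iInter₂.2 fun s hs => hvsm s (hTsub s hs)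
      obtain ⟨θP, hθP, hballV⟩ := Metric.isOpen_iff.1 hVo pb hVp
      refine ⟨θP, hθP, ?_⟩
      intro p hpP hdp s hs
      obtain ⟨u0, hu0T, hsu0⟩ := mem_iUnion₂.1 (hTcov hs)
      have hpV : p ∈ vs u0 := by
        have : p ∈ V := hballV (mem_ball.2 hdp)
        exact mem_iInter₂.1 this u0 hu0T
      exact (hkey u0 (hTsub u0 hu0T) (s, p) ⟨⟨hsu0, hpV⟩, ⟨hs, hpP⟩⟩).le
    obtain ⟨θP, hθP0, hcompP⟩ := hcomp
    obtain ⟨θt, hθt0, hβt⟩ := Metric.continuous_iff.1 hβc tb (η / 4) (by positivity)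
    set θ : ℝ := min (min θP θt) η' with hθ
    have hθ0 : 0 < θ := lt_min (lt_min hθP0 hθt0) hη'0
    refine ⟨θ, hθ0, ?_⟩
    rintro ⟨t, x, p⟩ ⟨ht, hx, hp⟩ hdq
    have hdt : dist t tb ≤ dist ((t, x, p) : ℝ × E × Z) (tb, xb, pb) := by
      rw [Prod.dist_eq]; exact le_max_left _ _
    have hdx : dist x xb ≤ dist ((t, x, p) : ℝ × E × Z) (tb, xb, pb) := by
      rw [Prod.dist_eq, Prod.dist_eq]
      exact le_trans (le_max_left _ _) (le_max_right _ _)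
    have hdp : dist p pb ≤ dist ((t, x, p) : ℝ × E × Z) (tb, xb, pb) := by
      rw [Prod.dist_eq, Prod.dist_eq]
      exact le_trans (le_max_right _ _) (le_max_right _ _)
    set α := sol τ₀ x p with hα
    have hα0 : α τ₀ = x := hsol0 τ₀ x p hτ₀ hx hp
    have hαball : ∀ t, α t ∈ closedBall x (2 * r) := hsolball τ₀ x p hτ₀ hx hp
    have hαd : ∀ s ∈ Icc c d, HasDerivWithinAt α (f (s, α s, p)) (Icc c d) s :=
      hsolderiv τ₀ x p hτ₀ hx hp
    have hGron : ∀ s ∈ Icc c d, dist (β s) (α s) ≤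
        (dist xb x + η') * Real.exp (((L : ℝ) + 1) * (d - c)) := by
      apply myGronTwo hτ₀ (fun s hs => hLipS s hs p hp) hη'0.le dist_nonneg
        (fun s _ => hballS xb hxb (hβball s)) (fun s _ => hballS x hx (hαball s))
        hβd hαd
      · intro s hs
        rw [dist_comm]
        exact hcompP p hp (lt_of_le_of_lt hdp (hdq.trans_le
          ((min_le_left _ _).trans (min_le_left _ _)))) s hs
      · rw [hβ0, hα0]
    show dist (sol τ₀ x p t) (sol τ₀ xb pb tb) < η
    have h1 : dist (sol τ₀ x p t) (β t) ≤ (dist xb x + η') * M := by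
      rw [dist_comm]; exact hGron t ht
    have h2 : dist (β t) (β tb) < η / 4 := hβt t (lt_of_le_of_lt hdt (hdq.trans_le
      ((min_le_left _ _).trans (min_le_right _ _))))
    have h3 : dist xb x < η' := by
      rw [dist_comm]
      exact lt_of_le_of_lt hdx (hdq.trans_le (min_le_right _ _))
    have h4 : (dist xb x + η') * M < 2 * η' * M := by
      apply mul_lt_mul_of_pos_right _ hM0
      linarith
    have h5 : 2 * η' * M ≤ η / 2 := by
      have hkey : η' * (4 * (M + 1)) = η := by rw [hη']; field_simp
      nlinarith [hη'0.le, hM0.le]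
    have htri := dist_triangle (sol τ₀ x p t) (β t) (β tb)
    linarith
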